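/- Let F be an infinitary propositional formula over σ and A ⊆ σ a set of atoms such that every atom occurring in F belongs to A. Then for any interpretation I, I is an A-stable model of F if and only if I ∩ A is a stable model of F. -/
import Mathlib


/-- Infinitary propositional formulas over signature `σ`:
atoms, conjunctions and disjunctions of (index-)sets of formulas, implication. -/
inductive Formula (σ : Type) : Type 1
  | atom : σ → Formula σ
  | conj : (ι : Type) → (ι → Formula σ) → Formula σ
  | disj : (ι : Type) → (ι → Formula σ) → Formula σ
  | imp : Formula σ → Formula σ → Formula σ

namespace Formula

variable {σ : Type}

/-- `⊥` is the empty disjunction. -/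
def bot : Formula σ := Formula.disj Empty (fun e => e.elim)

/-- Binary conjunction `F ∧ G`. -/
def and (F G : Formula σ) : Formula σ := Formula.conj Bool (fun b => if b then F else G)

/-- Binary disjunction `F ∨ G`. -/
def or (F G : Formula σ) : Formula σ := Formula.disj Bool (fun b => if b then F else G)

/-- Negation `¬F` abbreviates `F → ⊥`. -/
def neg (F : Formula σ) : Formula σ := Formula.imp F bot

/-- Conjunction of a set of atoms. -/
def conjAtoms (S : Set σ) : Formula σ := Formula.conj S (fun p => Formula.atom p.val)

/-- Satisfaction of an infinitary formula by an interpretation `I ⊆ σ`. -/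
def Sat (I : Set σ) : Formula σ → Prop
  | .atom p => p ∈ I
  | .conj _ f => ∀ i, Sat I (f i)
  | .disj _ f => ∃ i, Sat I (f i)
  | .imp F G => Sat I F → Sat I G

open Classical in
/-- The reduct `F^I`. -/
noncomputable def reduct (I : Set σ) : Formula σ → Formula σ
  | .atom p => if p ∈ I then Formula.atom p else bot
  | .conj ι f => Formula.conj ι (fun i => reduct I (f i))
  | .disj ι f => Formula.disj ι (fun i => reduct I (f i))
  | .imp F G => if Sat I (Formula.imp F G) then Formula.imp (reduct I F) (reduct I G) else bot

/-- `I` is an `A`-stable model of `F`: `I` is minimal w.r.t. `≤_A`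
(`J ≤_A I` iff `J ⊆ I` and `I \ J ⊆ A`) among interpretations satisfying `F^I`. -/
def AStable (A : Set σ) (I : Set σ) (F : Formula σ) : Prop :=
  Sat I (reduct I F) ∧ ∀ J : Set σ, J ⊆ I → I \ J ⊆ A → Sat J (reduct I F) → J = I

/-- A stable model is a `σ`-stable model. -/
def Stable (I : Set σ) (F : Formula σ) : Prop := AStable Set.univ I F

/-- The strictly positive atoms `P(F)`. -/
def spos : Formula σ → Set σ
  | .atom p => {p}
  | .conj _ f => ⋃ i, spos (f i)
  | .disj _ f => ⋃ i, spos (f i)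
  | .imp _ H => spos H

/-- `F` is (syntactically) the formula `⊥`, i.e. an empty disjunction. -/
def IsBot : Formula σ → Prop
  | .disj ι _ => IsEmpty ι
  | _ => False

open Classical in
mutual
/-- Positive nonnegated atoms `Pnn(F)`. -/
noncomputable def pnn : Formula σ → Set σ
  | .atom p => {p}
  | .conj _ f => ⋃ i, pnn (f i)
  | .disj _ f => ⋃ i, pnn (f i)
  | .imp G H => if IsBot H then ∅ else nnn G ∪ pnn H

/-- Negative nonnegated atoms `Nnn(F)`. -/
noncomputable def nnn : Formula σ → Set σ
  | .atom _ => ∅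
  | .conj _ f => ⋃ i, nnn (f i)
  | .disj _ f => ⋃ i, nnn (f i)
  | .imp G H => if IsBot H then ∅ else pnn G ∪ nnn H
end

/-- The rules of a formula, as antecedent/consequent pairs. -/
def rules : Formula σ → Set (Formula σ × Formula σ)
  | .atom _ => ∅
  | .conj _ f => ⋃ i, rules (f i)
  | .disj _ f => ⋃ i, rules (f i)
  | .imp G H => insert (G, H) (rules H)

/-- Edge relation of the positive dependency graph `DG_A[F]` (vertex set `A`). -/
noncomputable def DGEdge (F : Formula σ) (A : Set σ) (p q : σ) : Prop :=
  p ∈ A ∧ q ∈ A ∧ ∃ R ∈ rules F, p ∈ spos R.2 ∧ q ∈ pnn R.1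

/-- The atoms occurring in a formula. -/
def atoms : Formula σ → Set σ
  | .atom p => {p}
  | .conj _ f => ⋃ i, atoms (f i)
  | .disj _ f => ⋃ i, atoms (f i)
  | .imp G H => atoms G ∪ atoms H

/-- `G` is a definition for the set `Q` of atoms: a conjunction of formulas
`H ∧ C^∧ → q` with `q ∈ Q`, `C ⊆ Q`, and no atom of `Q` occurring in `H`. -/
def IsDefinition (Q : Set σ) (G : Formula σ) : Prop :=
  ∃ (ι : Type) (g : ι → Formula σ), G = Formula.conj ι g ∧
    ∀ i, ∃ (H : Formula σ) (C : Set σ) (q : σ),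
      q ∈ Q ∧ C ⊆ Q ∧ (∀ p ∈ Q, p ∉ atoms H) ∧
      g i = Formula.imp (Formula.and H (conjAtoms C)) (Formula.atom q)

end Formula

section Graph

variable {V : Type*}

/-- An infinite walk in the directed graph with edge relation `E`. -/
def IsInfWalk (E : V → V → Prop) (w : ℕ → V) : Prop := ∀ i, E (w i) (w (i + 1))

/-- The partition `{P₁, P₂}` is infinitely separable: every infinite walk
visits `P₁` or `P₂` only finitely often. -/
def InfSeparable (E : V → V → Prop) (P1 P2 : Set V) : Prop :=
  ∀ w : ℕ → V, IsInfWalk E w → {i | w i ∈ P1}.Finite ∨ {i | w i ∈ P2}.Finite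

/-- `u` and `v` are in the same strongly connected component:
each is reachable from the other. -/
def SameSCC (E : V → V → Prop) (u v : V) : Prop :=
  Relation.ReflTransGen E u v ∧ Relation.ReflTransGen E v u

/-- The partition `{P₁, P₂}` is separable: every strongly connected
component is contained in `P₁` or in `P₂`. -/
def Separable (E : V → V → Prop) (P1 P2 : Set V) : Prop :=
  ∀ u v, SameSCC E u v → ((u ∈ P1 ∧ v ∈ P1) ∨ (u ∈ P2 ∧ v ∈ P2))

end Graph
namespace Formula

variable {σ : Type}

lemma sat_congr {I J : Set σ} : ∀ {F : Formula σ},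
    (∀ p ∈ atoms F, (p ∈ I ↔ p ∈ J)) → (Sat I F ↔ Sat J F)
  | .atom p, h => h p rfl
  | .conj ι f, h => by
      simp only [Sat]
      exact forall_congr' fun i => sat_congr fun p hp =>
        h p (Set.mem_iUnion.2 ⟨i, hp⟩)
  | .disj ι f, h => by
      simp only [Sat]
      exact exists_congr fun i => sat_congr fun p hp =>
        h p (Set.mem_iUnion.2 ⟨i, hp⟩)
  | .imp G H, h => by
      simp only [Sat]
      exact imp_congr (sat_congr fun p hp => h p (Or.inl hp))
        (sat_congr fun p hp => h p (Or.inr hp))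

lemma atoms_reduct (I : Set σ) : ∀ F : Formula σ, atoms (reduct I F) ⊆ atoms F
  | .atom p => by
      simp only [reduct]; split
      · exact subset_rfl
      · intro x hx; simp [atoms, bot] at hx
  | .conj ι f => by
      simp only [reduct, atoms]
      exact Set.iUnion_mono fun i => atoms_reduct I (f i)
  | .disj ι f => by
      simp only [reduct, atoms]
      exact Set.iUnion_mono fun i => atoms_reduct I (f i)
  | .imp G H => by
      simp only [reduct]; split
      · exact Set.union_subset_union (atoms_reduct I G) (atoms_reduct I H)
      · intro x hx; simp [atoms, bot] at hx

lemma reduct_congr {I J : Set σ} : ∀ {F : Formula σ},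
    (∀ p ∈ atoms F, (p ∈ I ↔ p ∈ J)) → reduct I F = reduct J F
  | .atom p, h => by
      simp only [reduct]
      rcases (h p rfl) with ⟨h1, h2⟩
      by_cases hp : p ∈ I
      · rw [if_pos hp, if_pos (h1 hp)]
      · rw [if_neg hp, if_neg (fun hj => hp (h2 hj))]
  | .conj ι f, h => by
      simp only [reduct]
      congr 1; funext i
      exact reduct_congr fun p hp => h p (Set.mem_iUnion.2 ⟨i, hp⟩)
  | .disj ι f, h => by
      simp only [reduct]
      congr 1; funext i
      exact reduct_congr fun p hp => h p (Set.mem_iUnion.2 ⟨i, hp⟩)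
  | .imp G H, h => by
      have hG : ∀ p ∈ atoms G, (p ∈ I ↔ p ∈ J) := fun p hp => h p (Or.inl hp)
      have hH : ∀ p ∈ atoms H, (p ∈ I ↔ p ∈ J) := fun p hp => h p (Or.inr hp)
      have hs : Sat I (Formula.imp G H) ↔ Sat J (Formula.imp G H) :=
        sat_congr h
      simp only [reduct]
      by_cases hi : Sat I (Formula.imp G H)
      · rw [if_pos hi, if_pos (hs.1 hi), reduct_congr hG, reduct_congr hH]
      · rw [if_neg hi, if_neg (fun hj => hi (hs.2 hj))]

end Formula

theorem astable_iff_inter_stable' {σ : Type} (F : Formula σ) (A : Set σ)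
    (hocc : Formula.atoms F ⊆ A) (I : Set σ) :
    Formula.AStable A I F ↔ Formula.Stable (I ∩ A) F := by
  have hagree : ∀ p ∈ Formula.atoms F, (p ∈ I ↔ p ∈ I ∩ A) := by
    intro p hp
    simp only [Set.mem_inter_iff]
    exact ⟨fun h => ⟨h, hocc hp⟩, fun h => h.1⟩
  have hred : Formula.reduct I F = Formula.reduct (I ∩ A) F :=
    Formula.reduct_congr hagree
  have hatR : Formula.atoms (Formula.reduct I F) ⊆ A :=
    fun p hp => hocc (Formula.atoms_reduct I F hp)
  constructor
  · rintro ⟨hsat, hmin⟩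
    constructor
    · rw [← hred]
      exact (Formula.sat_congr (fun p hp =>
        show p ∈ I ↔ p ∈ I ∩ A from
          ⟨fun h => ⟨h, hatR hp⟩, fun h => h.1⟩)).1 hsat
    · intro J hJsub _ hJsat
      rw [← hred] at hJsat
      set J' := J ∪ (I \ A) with hJ'
      have hJ'sub : J' ⊆ I := by
        intro x hx
        rcases hx with hx | hx
        · exact (hJsub hx).1
        · exact hx.1
      have hdiff : I \ J' ⊆ A := by
        intro x ⟨hxI, hxJ'⟩
        by_contra hxA
        exact hxJ' (Or.inr ⟨hxI, hxA⟩)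
      have hJ'sat : Formula.Sat J' (Formula.reduct I F) := by
        refine (Formula.sat_congr (fun p hp => ?_)).1 hJsat
        have hpA := hatR hp
        constructor
        · exact fun h => Or.inl h
        · rintro (h | h)
          · exact h
          · exact absurd hpA h.2
      have := hmin J' hJ'sub hdiff hJ'sat
      ext x
      constructor
      · exact fun hx => hJsub hx
      · rintro ⟨hxI, hxA⟩
        have : x ∈ J' := this ▸ hxI
        rcases this with h | h
        · exact h
        · exact absurd hxA h.2
  · rintro ⟨hsat, hmin⟩
    constructor
    · rw [hred]
      exact (Formula.sat_congr (fun p hp =>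
        show p ∈ I ∩ A ↔ p ∈ I from
          ⟨fun h => h.1, fun h => ⟨h, hocc (Formula.atoms_reduct _ F hp)⟩⟩)).1 hsat
    · intro J hJsub hdiff hJsat
      have hJAsat : Formula.Sat (J ∩ A) (Formula.reduct (I ∩ A) F) := by
        rw [← hred]
        refine (Formula.sat_congr (fun p hp => ?_)).1 hJsat
        exact ⟨fun h => ⟨h, hatR hp⟩, fun h => h.1⟩
      have hkey := hmin (J ∩ A) (Set.inter_subset_inter_left A hJsub)
        (fun x _ => trivial) hJAsat
      ext x
      refine ⟨fun hx => hJsub hx, fun hx => ?_⟩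
      by_cases hxA : x ∈ A
      · have : x ∈ I ∩ A := ⟨hx, hxA⟩
        rw [← hkey] at this
        exact this.1
      · by_contra hxJ
        exact hxA (hdiff ⟨hx, hxJ⟩)

/-- if every atom occurring in `F` belongs to `A`, then `I` is an
`A`-stable model of `F` iff `I ∩ A` is a stable model of `F`. -/
theorem astable_iff_inter_stable {σ : Type} (F : Formula σ) (A : Set σ)
    (hocc : Formula.atoms F ⊆ A) (I : Set σ) :
    Formula.AStable A I F ↔ Formula.Stable (I ∩ A) F := by
  exact astable_iff_inter_stable' F A hocc I
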